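/- (Hong–Pan lower bound, row version) For an invertible n×n complex matrix A, σ_min(A) ≥ ((n-1)/n)^{(n-1)/2} · |det A| · r_min(A)/∏_{i=1}^n r_i(A), where r_i(A) is the L² norm of the i-th row and r_min is the smallest of these. -/

import Mathlib

open Finset Matrix

section HongPanAux

open ComplexOrder

/-- If `c` is below all eigenvalues of a Hermitian matrix `M`, then `M - c•1` is PSD. -/
private lemma hp_psd_shift {n : ℕ} {M : Matrix (Fin n) (Fin n) ℂ} (hM : M.IsHermitian)
    {c : ℝ} (hc : ∀ i, c ≤ hM.eigenvalues i) :
    ((M - (c:ℂ) • 1)).PosSemidef := by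
  have hU : (hM.eigenvectorUnitary : Matrix (Fin n) (Fin n) ℂ) *
      (hM.eigenvectorUnitary : Matrix (Fin n) (Fin n) ℂ)ᴴ = 1 := by
    simpa [star_eq_conjTranspose] using
      (Matrix.mem_unitaryGroup_iff.mp hM.eigenvectorUnitary.2)
  have key : M - (c:ℂ) • 1 =
      (hM.eigenvectorUnitary : Matrix (Fin n) (Fin n) ℂ) *
        (diagonal (fun i => ((hM.eigenvalues i - c : ℝ) : ℂ))) *
        (hM.eigenvectorUnitary : Matrix (Fin n) (Fin n) ℂ)ᴴ := by
    have h1 := hM.spectral_theorem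
    have : (diagonal (fun i => ((hM.eigenvalues i - c : ℝ) : ℂ)))
        = diagonal (RCLike.ofReal ∘ hM.eigenvalues) - (c:ℂ) • 1 := by
      have h2 : (c:ℂ) • (1 : Matrix (Fin n) (Fin n) ℂ) = diagonal (fun _ => (c:ℂ)) := by
        ext i j
        by_cases h : i = j <;> simp [h, Matrix.one_apply]
      rw [h2, diagonal_sub]
      ext i
      simp [Function.comp, Complex.ofReal_sub]
    rw [this, Matrix.mul_sub, Matrix.sub_mul]
    rw [Matrix.mul_smul, Matrix.mul_one, Matrix.smul_mul, hU]
    rw [← star_eq_conjTranspose]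
    conv_lhs => rw [h1, Unitary.conjStarAlgAut_apply]
  rw [key]
  apply Matrix.PosSemidef.mul_mul_conjTranspose_same
  refine Matrix.posSemidef_diagonal_iff.mpr fun i => ?_
  rw [Complex.zero_le_real]
  linarith [hc i]

private lemma hp_star_dot_self {n : ℕ} (v : Fin n → ℂ) :
    (star v ⬝ᵥ v) = ((∑ i, Complex.normSq (v i) : ℝ) : ℂ) := by
  simp [dotProduct, Complex.ofReal_sum, Pi.star_apply, Complex.star_def,
    Complex.normSq_eq_conj_mul_self]

/-- Rayleigh-type lower bound for a Hermitian matrix. -/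
private lemma hp_rayleigh {n : ℕ} {M : Matrix (Fin n) (Fin n) ℂ} (hM : M.IsHermitian)
    {c : ℝ} (hc : ∀ i, c ≤ hM.eigenvalues i) (v : Fin n → ℂ) :
    c * (star v ⬝ᵥ v).re ≤ (star v ⬝ᵥ (M *ᵥ v)).re := by
  have h := (hp_psd_shift hM hc).dotProduct_mulVec_nonneg v
  rw [Matrix.sub_mulVec, dotProduct_sub, Matrix.smul_mulVec, Matrix.one_mulVec,
    dotProduct_smul, smul_eq_mul] at h
  have h2 := (Complex.le_def.mp h).1
  simp only [Complex.zero_re, Complex.sub_re, Complex.mul_re, Complex.ofReal_re,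
    Complex.ofReal_im, zero_mul] at h2
  linarith

/-- Trace of a Hermitian matrix is the sum of its eigenvalues. -/
private lemma hp_trace_eq_sum_eig {n : ℕ} {M : Matrix (Fin n) (Fin n) ℂ} (hM : M.IsHermitian) :
    M.trace = ((∑ i, hM.eigenvalues i : ℝ) : ℂ) := by
  conv_lhs => rw [hM.spectral_theorem, Unitary.conjStarAlgAut_apply]
  rw [Matrix.trace_mul_cycle]
  have h1 : star (hM.eigenvectorUnitary : Matrix (Fin n) (Fin n) ℂ) *
      (hM.eigenvectorUnitary : Matrix (Fin n) (Fin n) ℂ) = 1 :=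
    Unitary.coe_star_mul_self hM.eigenvectorUnitary
  rw [h1, Matrix.one_mul, Matrix.trace_diagonal]
  simp [Complex.ofReal_sum]

/-- AM–GM: the product is at most the `card`-th power of the average. -/
private lemma hp_amgm {ι : Type*} (s : Finset ι) (f : ι → ℝ) (hf : ∀ i ∈ s, 0 ≤ f i) :
    ∏ i ∈ s, f i ≤ ((∑ i ∈ s, f i) / s.card) ^ (s.card) := by
  rcases Nat.eq_zero_or_pos s.card with h0 | hpos
  · rw [Finset.card_eq_zero.mp h0]; simp
  · have hcard : (0:ℝ) < s.card := by exact_mod_cast hpos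
    have key := Real.geom_mean_le_arith_mean_weighted s (fun _ => 1 / s.card) f
      (fun i _ => by positivity) (by rw [Finset.sum_const, nsmul_eq_mul]; field_simp) hf
    have hL : ∏ i ∈ s, f i ^ (1 / (s.card:ℝ)) = (∏ i ∈ s, f i) ^ (1 / (s.card:ℝ)) :=
      Real.finset_prod_rpow s f hf _
    rw [hL] at key
    have hsum : ∑ i ∈ s, (1 / (s.card:ℝ)) * f i = (∑ i ∈ s, f i) / s.card := by
      rw [← Finset.mul_sum]; ring
    rw [hsum] at key
    have hprod : 0 ≤ ∏ i ∈ s, f i := Finset.prod_nonneg hf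
    calc ∏ i ∈ s, f i = ((∏ i ∈ s, f i) ^ (1 / (s.card:ℝ))) ^ (s.card : ℕ) := by
          rw [← Real.rpow_natCast ((∏ i ∈ s, f i) ^ (1 / (s.card:ℝ))), ← Real.rpow_mul hprod]
          rw [one_div, inv_mul_cancel₀ (ne_of_gt hcard), Real.rpow_one]
      _ ≤ _ := pow_le_pow_left₀ (Real.rpow_nonneg hprod _) key _

private lemma hp_eig_nonneg {n : ℕ} (B : Matrix (Fin n) (Fin n) ℂ) (j : Fin n) :
    0 ≤ (Matrix.isHermitian_conjTranspose_mul_self B).eigenvalues j :=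
  (Matrix.posSemidef_conjTranspose_mul_self B).eigenvalues_nonneg j

/-- `star v ⬝ᵥ (Xᴴ X v) = ‖X v‖²`-type identity. -/
private lemma hp_dot_conj {n : ℕ} (X : Matrix (Fin n) (Fin n) ℂ) (v : Fin n → ℂ) :
    star v ⬝ᵥ ((Xᴴ * X) *ᵥ v) = star (X *ᵥ v) ⬝ᵥ (X *ᵥ v) := by
  rw [← Matrix.mulVec_mulVec, Matrix.dotProduct_mulVec, ← Matrix.star_mulVec]

end HongPanAux

/-- The smallest singular value of a square complex matrix. -/
noncomputable def sigmaMin {n : ℕ} (A : Matrix (Fin n) (Fin n) ℂ) : ℝ :=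
  Real.sqrt (⨅ i, (Matrix.isHermitian_conjTranspose_mul_self A).eigenvalues i)

/-- The `L²` norm of the `i`-th row of a complex matrix. -/
noncomputable def rowNorm {n : ℕ} (A : Matrix (Fin n) (Fin n) ℂ) (i : Fin n) : ℝ :=
  Real.sqrt (∑ j, ‖A i j‖ ^ 2)

/-- Hong–Pan lower bound (row version): for an invertible `n×n` complex matrix `A`,
`σ_min(A) ≥ ((n-1)/n)^((n-1)/2) · |det A| · r_min(A) / ∏ᵢ rᵢ(A)`. -/
theorem hong_pan_lower_bound (n : ℕ) (hn : 0 < n)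
    (A : Matrix (Fin n) (Fin n) ℂ) (hA : IsUnit A.det) :
    sigmaMin A ≥ (((n : ℝ) - 1) / (n : ℝ)) ^ (((n : ℝ) - 1) / 2) *
      ‖A.det‖ * (⨅ i, rowNorm A i) / ∏ i, rowNorm A i := by
  classical
  haveI : Nonempty (Fin n) := Fin.pos_iff_nonempty.mp hn
  have hdet : A.det ≠ 0 := hA.ne_zero
  set r : Fin n → ℝ := rowNorm A with hr_def
  -- row norms are positive
  have hrsq : ∀ i, (r i) ^ 2 = ∑ j, ‖A i j‖ ^ 2 := fun i =>
    Real.sq_sqrt (Finset.sum_nonneg fun j _ => by positivity)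
  have hr_pos : ∀ i, 0 < r i := by
    intro i
    have h0 : (0:ℝ) ≤ r i := Real.sqrt_nonneg _
    rcases h0.lt_or_eq with h | h
    · exact h
    · exfalso
      apply hdet
      apply Matrix.det_eq_zero_of_row_eq_zero i
      intro j
      have h2 : ∑ k, ‖A i k‖ ^ 2 = 0 := by
        rw [← hrsq i, ← h]; norm_num
      have h3 : ‖A i j‖ ^ 2 = 0 := by
        have := Finset.sum_eq_zero_iff_of_nonneg (fun k _ => by positivity) |>.mp h2 j
          (Finset.mem_univ j)
        exact this
      simpa using pow_eq_zero_iff (n := 2) (by norm_num) |>.mp h3 |> norm_eq_zero.mp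
  have hr_ne : ∀ i, (r i : ℂ) ≠ 0 := fun i => by
    exact_mod_cast Complex.ofReal_ne_zero.mpr (hr_pos i).ne'
  -- the row-normalized matrix B
  set B : Matrix (Fin n) (Fin n) ℂ :=
    diagonal (fun i => ((r i : ℂ))⁻¹) * A with hB_def
  have hB_apply : ∀ i j, B i j = ((r i : ℂ))⁻¹ * A i j := by
    intro i j; rw [hB_def]; rw [Matrix.diagonal_mul]
  have hA_apply : ∀ i j, A i j = (r i : ℂ) * B i j := by
    intro i j
    rw [hB_apply, ← mul_assoc, mul_inv_cancel₀ (hr_ne i), one_mul]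
  -- rows of B have norm 1
  have hBrow : ∀ i, ∑ j, Complex.normSq (B i j) = 1 := by
    intro i
    have : ∀ j, Complex.normSq (B i j) = (r i)⁻¹ ^ 2 * ‖A i j‖ ^ 2 := by
      intro j
      rw [hB_apply, Complex.normSq_mul, ← Complex.ofReal_inv, Complex.normSq_ofReal,
        ← Complex.sq_norm]
      ring
    simp_rw [this]
    rw [← Finset.mul_sum, ← hrsq i]
    field_simp
    exact div_self (hr_pos i).ne'
  -- eigenvalues of BᴴB
  have hN := Matrix.isHermitian_conjTranspose_mul_self B
  set μ : Fin n → ℝ := hN.eigenvalues with hμ_def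
  have hμ0 : ∀ j, 0 ≤ μ j := fun j => hp_eig_nonneg B j
  -- determinant of B
  have hdetB_ne : B.det ≠ 0 := by
    rw [hB_def, Matrix.det_mul, Matrix.det_diagonal]
    exact mul_ne_zero (Finset.prod_ne_zero_iff.mpr fun i _ => inv_ne_zero (hr_ne i)) hdet
  have habsdet : ‖A.det‖ = (∏ i, r i) * ‖B.det‖ := by
    rw [hB_def, Matrix.det_mul, Matrix.det_diagonal, norm_mul, norm_prod]
    have : ∀ i, ‖((r i : ℂ))⁻¹‖ = (r i)⁻¹ := by
      intro i; rw [norm_inv, Complex.norm_real, Real.norm_eq_abs, abs_of_pos (hr_pos i)]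
    simp_rw [this]
    rw [← mul_assoc, ← Finset.prod_mul_distrib]
    have : ∀ i ∈ Finset.univ, r i * (r i)⁻¹ = 1 := fun i _ =>
      mul_inv_cancel₀ (hr_pos i).ne'
    rw [Finset.prod_congr rfl this]
    simp
  -- product of eigenvalues of BᴴB equals |det B|²
  have hprodμ : ∏ j, μ j = ‖B.det‖ ^ 2 := by
    have h1 := hN.det_eq_prod_eigenvalues
    have h2 : (Bᴴ * B).det = ((‖B.det‖ ^ 2 : ℝ) : ℂ) := by
      rw [Matrix.det_mul, Matrix.det_conjTranspose, Complex.sq_norm, Complex.star_def,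
        ← Complex.normSq_eq_conj_mul_self, Complex.ofReal_inj.mpr rfl]
    rw [h2] at h1
    have h3 : ((‖B.det‖ ^ 2 : ℝ) : ℂ) = ((∏ j, μ j : ℝ) : ℂ) := by
      rw [h1, Complex.ofReal_prod]
      rfl
    exact (Complex.ofReal_inj.mp h3).symm
  -- sum of eigenvalues of BᴴB equals n
  have hsumμ : ∑ j, μ j = n := by
    have h1 := hp_trace_eq_sum_eig hN
    have h2 : (Bᴴ * B).trace = ((n : ℝ) : ℂ) := by
      rw [Matrix.trace]
      have : ∀ i, (Bᴴ * B).diag i = ((∑ k, Complex.normSq (B k i) : ℝ) : ℂ) := by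
        intro i
        simp [Matrix.diag, Matrix.mul_apply, Matrix.conjTranspose_apply, Complex.ofReal_sum,
          Complex.star_def, Complex.normSq_eq_conj_mul_self]
      simp_rw [this]
      rw [← Complex.ofReal_sum, Finset.sum_comm]
      simp_rw [hBrow]
      simp
    rw [h2] at h1
    exact_mod_cast (Complex.ofReal_inj.mp h1).symm
  -- all eigenvalues of BᴴB are positive
  have hμpos : ∀ j, 0 < μ j := by
    intro j
    rcases (hμ0 j).lt_or_eq with h | h
    · exact h
    · exfalso
      have : ∏ k, μ k = 0 := Finset.prod_eq_zero (Finset.mem_univ j) h.symm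
      rw [hprodμ] at this
      exact pow_ne_zero 2 (norm_ne_zero_iff.mpr hdetB_ne) this
  -- the minimal eigenvalue of BᴴB
  obtain ⟨j₀, hj₀⟩ := Finite.exists_min μ
  set c : ℝ := μ j₀ with hc_def
  -- Step 2 : Hong-Pan bound for the unit-row matrix B
  have step2 : (((n:ℝ) - 1) / n) ^ (n - 1) * ‖B.det‖ ^ 2 ≤ c := by
    set s : Finset (Fin n) := Finset.univ.erase j₀ with hs_def
    have hcard : s.card = n - 1 := by
      rw [hs_def, Finset.card_erase_of_mem (Finset.mem_univ j₀), Finset.card_univ,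
        Fintype.card_fin]
    have hP : c * ∏ j ∈ s, μ j = ‖B.det‖ ^ 2 := by
      rw [← hprodμ, hc_def, hs_def, Finset.mul_prod_erase _ _ (Finset.mem_univ j₀)]
    have hs_sum : ∑ j ∈ s, μ j ≤ n := by
      have := Finset.add_sum_erase Finset.univ μ (Finset.mem_univ j₀)
      rw [hs_def]
      nlinarith [hμ0 j₀, hsumμ, this]
    have hprod_pos : 0 < ∏ j ∈ s, μ j := Finset.prod_pos fun j _ => hμpos j
    have hn1 : (0:ℝ) ≤ (n:ℝ) - 1 := by
      have : (1:ℝ) ≤ n := by exact_mod_cast hn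
      linarith
    have hAM : ∏ j ∈ s, μ j ≤ ((n:ℝ) / ((n:ℝ) - 1)) ^ (n - 1) := by
      calc ∏ j ∈ s, μ j ≤ ((∑ j ∈ s, μ j) / s.card) ^ s.card :=
            hp_amgm s μ fun j _ => hμ0 j
        _ ≤ ((n:ℝ) / ((n:ℝ) - 1)) ^ (n - 1) := by
            rw [hcard]
            apply pow_le_pow_left₀
              (div_nonneg (Finset.sum_nonneg fun j _ => hμ0 j) (Nat.cast_nonneg _))
            have hcast : ((n - 1 : ℕ) : ℝ) = (n:ℝ) - 1 := by
              rw [Nat.cast_sub hn]; norm_num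
            rw [hcast]
            rcases eq_or_lt_of_le hn1 with h | h
            · rw [← h]; simp
            · exact (div_le_div_iff_of_pos_right h).mpr hs_sum
    have hQpos : 0 < ((n:ℝ) / ((n:ℝ) - 1)) ^ (n - 1) := lt_of_lt_of_le hprod_pos hAM
    have hc_eq : c = ‖B.det‖ ^ 2 / ∏ j ∈ s, μ j := by
      rw [eq_div_iff hprod_pos.ne']
      exact hP
    rw [hc_eq]
    have h1 : ‖B.det‖ ^ 2 / ((n:ℝ) / ((n:ℝ) - 1)) ^ (n - 1) ≤
        ‖B.det‖ ^ 2 / ∏ j ∈ s, μ j :=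
      div_le_div_of_nonneg_left (by positivity) hprod_pos hAM
    refine le_trans (le_of_eq ?_) h1
    rw [eq_div_iff hQpos.ne', mul_right_comm, ← mul_pow]
    rcases Nat.lt_or_ge n 2 with h2 | h2
    · have he : n - 1 = 0 := by omega
      rw [he, pow_zero, one_mul]
    · have hmul : ((n:ℝ) - 1) / n * ((n:ℝ) / ((n:ℝ) - 1)) = 1 := by
        have hn1' : (n:ℝ) - 1 ≠ 0 := by
          have : (2:ℝ) ≤ n := by exact_mod_cast h2
          linarith
        have hnn : (n:ℝ) ≠ 0 := by positivity
        field_simp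
      rw [hmul, one_pow, one_mul]
  -- Step 1 : every eigenvalue of AᴴA is at least rmin² * c
  have hM := Matrix.isHermitian_conjTranspose_mul_self A
  set rmin : ℝ := ⨅ i, r i with hrmin_def
  have hrmin_le : ∀ i, rmin ≤ r i := fun i =>
    ciInf_le (Set.Finite.bddBelow (Set.finite_range r)) i
  have hrmin0 : 0 ≤ rmin := le_ciInf fun i => (hr_pos i).le
  have step1 : ∀ i, rmin ^ 2 * c ≤ hM.eigenvalues i := by
    intro i
    set v : Fin n → ℂ := ⇑(hM.eigenvectorBasis i) with hv_def
    have h_eig : hM.eigenvalues i = (star v ⬝ᵥ ((Aᴴ * A) *ᵥ v)).re := by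
      have := hM.eigenvalues_eq i
      simpa using this
    have hv_norm : ∑ k, Complex.normSq (v k) = 1 := by
      have h1 : ‖hM.eigenvectorBasis i‖ = 1 := hM.eigenvectorBasis.orthonormal.1 i
      have h2 := EuclideanSpace.norm_eq (hM.eigenvectorBasis i)
      rw [h1] at h2
      have h3 : ∑ k, ‖hM.eigenvectorBasis i k‖ ^ 2 = 1 :=
        Real.sqrt_eq_one.mp h2.symm
      rw [← h3]
      refine Finset.sum_congr rfl fun k _ => ?_
      rw [Complex.sq_norm]
    -- A *ᵥ v = fun k => r k * (B *ᵥ v) k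
    set u : Fin n → ℂ := B *ᵥ v with hu_def
    have hw : ∀ k, (A *ᵥ v) k = (r k : ℂ) * u k := by
      intro k
      rw [hu_def, hB_def, ← Matrix.mulVec_mulVec, Matrix.mulVec_diagonal]
      rw [← mul_assoc, mul_inv_cancel₀ (hr_ne k), one_mul]
    have key1 : (star v ⬝ᵥ ((Aᴴ * A) *ᵥ v)).re = ∑ k, Complex.normSq ((A *ᵥ v) k) := by
      rw [hp_dot_conj, hp_star_dot_self]
      simp
    have key2 : (star v ⬝ᵥ ((Bᴴ * B) *ᵥ v)).re = ∑ k, Complex.normSq (u k) := by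
      rw [hp_dot_conj, hp_star_dot_self]
      simp
      rfl
    have hray := hp_rayleigh hN (fun j => hj₀ j) v
    have hvre : (star v ⬝ᵥ v).re = 1 := by
      rw [hp_star_dot_self]
      simp [hv_norm]
    rw [hvre, mul_one, key2] at hray
    have hterm : ∀ k, rmin ^ 2 * Complex.normSq (u k) ≤ Complex.normSq ((A *ᵥ v) k) := by
      intro k
      rw [hw k, Complex.normSq_mul, Complex.normSq_ofReal, ← sq]
      apply mul_le_mul_of_nonneg_right _ (Complex.normSq_nonneg _)
      exact pow_le_pow_left₀ hrmin0 (hrmin_le k) 2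
    calc rmin ^ 2 * c ≤ rmin ^ 2 * ∑ k, Complex.normSq (u k) := by
          apply mul_le_mul_of_nonneg_left hray (by positivity)
      _ = ∑ k, rmin ^ 2 * Complex.normSq (u k) := Finset.mul_sum _ _ _
      _ ≤ ∑ k, Complex.normSq ((A *ᵥ v) k) := Finset.sum_le_sum fun k _ => hterm k
      _ = hM.eigenvalues i := by rw [h_eig, key1]
  -- Final assembly
  set q : ℝ := (((n : ℝ) - 1) / (n : ℝ)) ^ (((n : ℝ) - 1) / 2) with hq_def
  have hn1 : (0:ℝ) ≤ (n:ℝ) - 1 := by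
    have : (1:ℝ) ≤ n := by exact_mod_cast hn
    linarith
  have hx0 : (0:ℝ) ≤ ((n:ℝ) - 1) / n := by positivity
  have hq0 : 0 ≤ q := Real.rpow_nonneg hx0 _
  have hq2 : q ^ 2 = (((n:ℝ) - 1) / n) ^ (n - 1) := by
    rw [hq_def, ← Real.rpow_natCast ((((n : ℝ) - 1) / (n : ℝ)) ^ (((n : ℝ) - 1) / 2)) 2,
      ← Real.rpow_mul hx0]
    have : ((n:ℝ) - 1) / 2 * (2:ℕ) = ((n - 1 : ℕ) : ℝ) := by
      rw [Nat.cast_sub hn]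
      push_cast
      ring
    rw [this, Real.rpow_natCast]
  have hprod_r_pos : 0 < ∏ i, r i := Finset.prod_pos fun i _ => hr_pos i
  set K : ℝ := q * ‖A.det‖ * rmin / ∏ i, r i with hK_def
  have hK_eq : K = q * ‖B.det‖ * rmin := by
    rw [hK_def, habsdet]
    field_simp
  have hK0 : 0 ≤ K := by
    rw [hK_eq]
    positivity
  have hK2 : K ^ 2 = rmin ^ 2 * ((((n:ℝ) - 1) / n) ^ (n - 1) * ‖B.det‖ ^ 2) := by
    rw [hK_eq, ← hq2]
    ring
  have hKle : ∀ i, K ^ 2 ≤ hM.eigenvalues i := by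
    intro i
    rw [hK2]
    calc rmin ^ 2 * ((((n:ℝ) - 1) / n) ^ (n - 1) * ‖B.det‖ ^ 2)
        ≤ rmin ^ 2 * c := mul_le_mul_of_nonneg_left step2 (by positivity)
      _ ≤ hM.eigenvalues i := step1 i
  have hinf : K ^ 2 ≤ ⨅ i, hM.eigenvalues i := le_ciInf hKle
  have hfin : K ≤ sigmaMin A := by
    calc K = Real.sqrt (K ^ 2) := (Real.sqrt_sq hK0).symm
      _ ≤ Real.sqrt (⨅ i, hM.eigenvalues i) := Real.sqrt_le_sqrt hinf
      _ = sigmaMin A := rfl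
  exact hfin
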